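/- Let μ = 0 and λ = 1. For any e ∈ ℂ, the ℂ-linear map ψ_e on 𝓛 defined by ψ_e(Lₙ) = Lₙ, ψ_e(Yₙ) = Yₙ + e·Mₙ, ψ_e(Mₙ) = Mₙ is a Lie algebra automorphism, and ψ_e ∘ ψ_{e'} = ψ_{e+e'}, so {ψ_e : e ∈ ℂ} is a subgroup of Aut 𝓛 isomorphic to (ℂ, +). -/

import Mathlib

theorem stmt_18 (𝓛 : Type*) [LieRing 𝓛] [LieAlgebra ℂ 𝓛]
    (L Y M : ℤ → 𝓛)
    (hspan : Submodule.span ℂ (Set.range L ∪ Set.range Y ∪ Set.range M) = ⊤)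
    (hind : LinearIndependent ℂ (fun p : ℤ × Fin 3 =>
      if p.2 = 0 then L p.1 else if p.2 = 1 then Y p.1 else M p.1))
    (hLL : ∀ n m : ℤ, ⁅L n, L m⁆ = ((m : ℂ) - (n : ℂ)) • L (n + m))
    (hLY : ∀ n m : ℤ, ⁅L n, Y m⁆ = ((m : ℂ) - (n : ℂ)) • Y (n + m))
    (hYY : ∀ n m : ℤ, ⁅Y n, Y m⁆ = ((m : ℂ) - (n : ℂ)) • M (n + m))
    (hLM : ∀ n m : ℤ, ⁅L n, M m⁆ = ((m : ℂ) - (n : ℂ)) • M (n + m))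
    (hYM : ∀ n m : ℤ, ⁅Y n, M m⁆ = 0)
    (hMM : ∀ n m : ℤ, ⁅M n, M m⁆ = 0) :
    ∃ ψ : ℂ → (𝓛 ≃ₗ[ℂ] 𝓛),
      Function.Injective ψ ∧
      (∀ e e' : ℂ, ∀ x : 𝓛, ψ (e + e') x = ψ e (ψ e' x)) ∧
      ∀ e : ℂ,
        (∀ x y : 𝓛, ψ e ⁅x, y⁆ = ⁅ψ e x, ψ e y⁆) ∧
        (∀ n : ℤ, ψ e (L n) = L n) ∧
        (∀ n : ℤ, ψ e (Y n) = Y n + e • M n) ∧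
        (∀ n : ℤ, ψ e (M n) = M n) := by
  classical
  set b : ℤ × Fin 3 → 𝓛 := fun p =>
    if p.2 = 0 then L p.1 else if p.2 = 1 then Y p.1 else M p.1 with hb
  have hbL : ∀ n : ℤ, b (n, 0) = L n := fun n => by simp [hb]
  have hbY : ∀ n : ℤ, b (n, 1) = Y n := fun n => by simp [hb]
  have hbM : ∀ n : ℤ, b (n, 2) = M n := fun n => by simp [hb]
  have hrange : Set.range b = Set.range L ∪ Set.range Y ∪ Set.range M := by
    ext x
    constructor
    · rintro ⟨⟨n, i⟩, rfl⟩
      fin_cases i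
      · exact Or.inl (Or.inl ⟨n, (hbL n).symm⟩)
      · exact Or.inl (Or.inr ⟨n, (hbY n).symm⟩)
      · exact Or.inr ⟨n, (hbM n).symm⟩
    · rintro ((⟨n, rfl⟩ | ⟨n, rfl⟩) | ⟨n, rfl⟩)
      · exact ⟨(n, 0), hbL n⟩
      · exact ⟨(n, 1), hbY n⟩
      · exact ⟨(n, 2), hbM n⟩
  have htop : ⊤ ≤ Submodule.span ℂ (Set.range b) := by rw [hrange, hspan]
  have hind' : LinearIndependent ℂ b := hind
  let B : Module.Basis (ℤ × Fin 3) ℂ 𝓛 := Module.Basis.mk hind' htop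
  have hBb : ∀ p, B p = b p := fun p => Module.Basis.mk_apply hind' htop p
  let π : 𝓛 →ₗ[ℂ] 𝓛 := B.constr ℂ (fun p => if p.2 = 1 then M p.1 else 0)
  have hπb : ∀ p, π (b p) = if p.2 = 1 then M p.1 else 0 := by
    intro p
    rw [← hBb]
    exact B.constr_basis ℂ _ p
  have hπL : ∀ n : ℤ, π (L n) = 0 := fun n => by
    rw [← hbL n, hπb]; simp
  have hπY : ∀ n : ℤ, π (Y n) = M n := fun n => by
    rw [← hbY n, hπb]; simp
  have hπM : ∀ n : ℤ, π (M n) = 0 := fun n => by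
    rw [← hbM n, hπb]; simp
  have hππ : ∀ x, π (π x) = 0 := by
    have : π.comp π = 0 := by
      apply B.ext
      intro p
      simp only [LinearMap.comp_apply, LinearMap.zero_apply]
      rw [hBb, hπb]
      split
      · exact hπM p.1
      · exact map_zero π
    intro x
    exact LinearMap.congr_fun this x
  let φ : ℂ → (𝓛 →ₗ[ℂ] 𝓛) := fun e => LinearMap.id + e • π
  have hφ : ∀ e x, φ e x = x + e • π x := fun e x => rfl
  have hφL : ∀ e n, φ e (L n) = L n := fun e n => by rw [hφ, hπL]; simp
  have hφY : ∀ e n, φ e (Y n) = Y n + e • M n := fun e n => by rw [hφ, hπY]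
  have hφM : ∀ e n, φ e (M n) = M n := fun e n => by rw [hφ, hπM]; simp
  have hcomp : ∀ e e' x, φ e (φ e' x) = φ (e + e') x := by
    intro e e' x
    simp only [hφ, map_add, map_smul, hππ, smul_add, smul_zero, add_smul]
    abel
  have hφ0 : ∀ x, φ 0 x = x := fun x => by rw [hφ]; simp
  let ψ : ℂ → (𝓛 ≃ₗ[ℂ] 𝓛) := fun e =>
    { toFun := φ e
      map_add' := (φ e).map_add
      map_smul' := (φ e).map_smul
      invFun := φ (-e)
      left_inv := fun x => by
        show φ (-e) (φ e x) = x
        rw [hcomp, neg_add_cancel, hφ0]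
      right_inv := fun x => by
        show φ e (φ (-e) x) = x
        rw [hcomp, add_neg_cancel, hφ0] }
  have hψ : ∀ e x, ψ e x = φ e x := fun e x => rfl
  have hM0 : M 0 ≠ 0 := by
    have := hind'.ne_zero ((0 : ℤ), (2 : Fin 3))
    rwa [show b ((0 : ℤ), (2 : Fin 3)) = M 0 from hbM 0] at this
  refine ⟨ψ, ?_, ?_, ?_⟩
  · intro e e' h
    have h1 : ψ e (Y 0) = ψ e' (Y 0) := by rw [h]
    rw [hψ, hψ, hφY, hφY] at h1
    have h2 : (e - e') • M 0 = 0 := by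
      rw [sub_smul]
      rw [add_right_inj] at h1
      rw [h1]; abel
    rcases smul_eq_zero.mp h2 with h3 | h3
    · exact sub_eq_zero.mp h3
    · exact absurd h3 hM0
  · intro e e' x
    rw [hψ, hψ, hψ, hcomp]
  · intro e
    refine ⟨?_, fun n => hφL e n, fun n => hφY e n, fun n => hφM e n⟩
    -- bracket preservation
    have hYL : ∀ n m : ℤ, ⁅Y n, L m⁆ = ((m : ℂ) - n) • Y (n + m) := by
      intro n m
      rw [← lie_skew, hLY m n, ← neg_smul, neg_sub, add_comm m n]
    have hML : ∀ n m : ℤ, ⁅M n, L m⁆ = ((m : ℂ) - n) • M (n + m) := by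
      intro n m
      rw [← lie_skew, hLM m n, ← neg_smul, neg_sub, add_comm m n]
    have hMY : ∀ n m : ℤ, ⁅M n, Y m⁆ = 0 := by
      intro n m
      rw [← lie_skew, hYM, neg_zero]
    let F : 𝓛 →ₗ[ℂ] 𝓛 →ₗ[ℂ] 𝓛 := LinearMap.mk₂ ℂ (fun x y => φ e ⁅x, y⁆)
      (fun x x' y => by simp only [add_lie, map_add])
      (fun c x y => by simp only [smul_lie, map_smul])
      (fun x y y' => by simp only [lie_add, map_add])
      (fun c x y => by simp only [lie_smul, map_smul])
    let G : 𝓛 →ₗ[ℂ] 𝓛 →ₗ[ℂ] 𝓛 := LinearMap.mk₂ ℂ (fun x y => ⁅φ e x, φ e y⁆)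
      (fun x x' y => by simp only [map_add, add_lie])
      (fun c x y => by simp only [map_smul, smul_lie])
      (fun x y y' => by simp only [map_add, lie_add])
      (fun c x y => by simp only [map_smul, lie_smul])
    have hFG : F = G := by
      apply B.ext
      intro p
      apply B.ext
      intro q
      obtain ⟨n, i⟩ := p
      obtain ⟨m, j⟩ := q
      have hFa : ∀ x y : 𝓛, F x y = φ e ⁅x, y⁆ := fun x y => rfl
      have hGa : ∀ x y : 𝓛, G x y = ⁅φ e x, φ e y⁆ := fun x y => rfl
      rw [hBb, hBb, hFa, hGa]
      have e0 : (⟨0, by omega⟩ : Fin 3) = 0 := rfl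
      have e1 : (⟨1, by omega⟩ : Fin 3) = 1 := rfl
      have e2 : (⟨2, by omega⟩ : Fin 3) = 2 := rfl
      fin_cases i <;> fin_cases j <;>
        simp only [e0, e1, e2, hbL, hbY, hbM, hLL, hLY, hYY, hLM, hYM, hMM, hYL, hML, hMY,
          hφL, hφY, hφM, map_smul, map_zero, lie_add, add_lie, lie_smul, smul_lie,
          smul_add, smul_zero, add_zero, zero_add, smul_smul] <;>
        module
    intro x y
    rw [hψ, hψ, hψ]
    exact LinearMap.congr_fun (LinearMap.congr_fun hFG x) y
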